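/- Let X and Y be finite multisets of equal cardinality m in a metric space, and let 𝟘 be a distinguished element. Then for any n ≥ 0, the unnormalized optimal transport cost between X ∪ {𝟘}^n and Y ∪ {𝟘}^n (where {𝟘}^n denotes n copies of 𝟘) equals the unnormalized optimal transport cost between X and Y. -/

import Mathlib

open scoped BigOperators

noncomputable section

/-- Unnormalized optimal transport between equal-cardinality multisets (represented
as lists): the minimum over bijective matchings of the summed ground costs. -/
noncomputable def listOT {α : Type*} (d : α → α → ℝ) (X Y : List α) : ℝ :=
  sInf {c : ℝ | ∃ Y' : List α, Y.Perm Y' ∧ c = (List.zipWith d X Y').sum}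

/-- Blank augmentation `ρ`: pad the smaller multiset with copies of the blank
element `b` so that both multisets have equal cardinality. -/
def pad {α : Type*} (b : α) (X Y : List α) : List α × List α :=
  (X ++ List.replicate (Y.length - X.length) b,
   Y ++ List.replicate (X.length - Y.length) b)

/-- Blank-augmented unnormalized optimal transport `OT_d(ρ(X, Y))`. -/
noncomputable def otPad {α : Type*} (d : α → α → ℝ) (b : α) (X Y : List α) : ℝ :=
  listOT d (pad b X Y).1 (pad b X Y).2

namespace ListOTAux

open List

variable {α : Type*}

def otSet (d : α → α → ℝ) (X Y : List α) : Set ℝ :=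
  {c : ℝ | ∃ Y' : List α, Y.Perm Y' ∧ c = (List.zipWith d X Y').sum}

lemma otSet_finite (d : α → α → ℝ) (X Y : List α) : (otSet d X Y).Finite := by
  have h : otSet d X Y ⊆ (fun Y' => (List.zipWith d X Y').sum) '' {Y' | Y' ∈ Y.permutations} := by
    rintro c ⟨Y', hp, rfl⟩
    exact ⟨Y', by simpa [List.mem_permutations] using hp.symm, rfl⟩
  exact ((Y.permutations.finite_toSet).image _).subset h

lemma otSet_nonempty (d : α → α → ℝ) (X Y : List α) : (otSet d X Y).Nonempty :=
  ⟨_, Y, List.Perm.refl Y, rfl⟩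

lemma otSet_bddBelow (d : α → α → ℝ) (X Y : List α) : BddBelow (otSet d X Y) :=
  (otSet_finite d X Y).bddBelow

/-- Swapping the matched element `b` for `y` changes the cost by at most `dist b y`. -/
lemma zip_replace_le [MetricSpace α] (y b : α) :
    ∀ (X A : List α) (B : List α),
      (List.zipWith dist X (A ++ y :: B)).sum ≤
        (List.zipWith dist X (A ++ b :: B)).sum + dist b y := by
  intro X
  induction X with
  | nil => intro A B; simp [dist_nonneg]
  | cons x X ih =>
    intro A B
    cases A with
    | nil =>
      simp only [List.nil_append, List.zipWith_cons_cons, List.sum_cons]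
      have h1 : dist x y ≤ dist x b + dist b y := dist_triangle x b y
      have h2 : (List.zipWith dist X B).sum ≤ (List.zipWith dist X B).sum := le_refl _
      linarith
    | cons a A =>
      simp only [List.cons_append, List.zipWith_cons_cons, List.sum_cons]
      have := ih A B
      linarith

/-- Key step: any matching of `X ++ [b]` with a permutation of `Y ++ [b]` is dominated
by some matching of `X` with a permutation of `Y`. -/
lemma step_le [MetricSpace α] (b : α) (X Y Y'' : List α)
    (hlen : X.length = Y.length) (hp : (Y ++ [b]).Perm Y'') :
    ∃ Y' : List α, Y.Perm Y' ∧
      (List.zipWith dist X Y').sum ≤ (List.zipWith dist (X ++ [b]) Y'').sum := by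
  have hlen'' : Y''.length = Y.length + 1 := by
    simpa using hp.length_eq.symm
  have hne : Y'' ≠ [] := by
    intro h; rw [h] at hlen''; simp at hlen''
  set y := Y''.getLast hne with hy
  set Y₀ := Y''.dropLast with hY₀
  have hsplit : Y₀ ++ [y] = Y'' := List.dropLast_append_getLast hne
  have hY₀len : Y₀.length = X.length := by
    have : Y₀.length = Y''.length - 1 := by simp [hY₀]
    omega
  have hzip : (List.zipWith dist (X ++ [b]) Y'').sum =
      (List.zipWith dist X Y₀).sum + dist b y := by
    rw [← hsplit, List.zipWith_append hY₀len.symm]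
    simp
  by_cases hyb : y = b
  · refine ⟨Y₀, ?_, ?_⟩
    · -- Y₀ ++ [b] ~ Y ++ [b]  ⇒  Y₀ ~ Y
      have h1 : (b :: Y).Perm (b :: Y₀) := by
        calc (b :: Y) ~ Y ++ [b] := (List.perm_append_singleton b Y).symm
          _ ~ Y'' := hp
          _ = Y₀ ++ [y] := hsplit.symm
          _ ~ y :: Y₀ := List.perm_append_singleton y Y₀
          _ = b :: Y₀ := by rw [hyb]
      exact h1.cons_inv
    · rw [hzip]; have := dist_nonneg (x := b) (y := y); linarith
  · -- b occurs in Y₀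
    have hbmem : b ∈ Y₀ := by
      have : b ∈ Y'' := hp.subset (by simp)
      rw [← hsplit] at this
      rcases List.mem_append.1 this with h | h
      · exact h
      · simp at h; exact absurd h.symm hyb
    obtain ⟨A, B, hAB⟩ := List.append_of_mem hbmem
    refine ⟨A ++ y :: B, ?_, ?_⟩
    · have h1 : (b :: Y).Perm (b :: (A ++ y :: B)) := by
        calc (b :: Y) ~ Y ++ [b] := (List.perm_append_singleton b Y).symm
          _ ~ Y'' := hp
          _ = (A ++ b :: B) ++ [y] := by rw [← hsplit, hAB]
          _ ~ (b :: (A ++ B)) ++ [y] := (List.perm_middle).append_right [y]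
          _ = b :: ((A ++ B) ++ [y]) := by simp
          _ ~ b :: (y :: (A ++ B)) := (List.perm_append_singleton y (A ++ B)).cons b
          _ ~ b :: (A ++ y :: B) := (List.perm_middle.symm).cons b
      exact h1.cons_inv
    · rw [hzip, hAB]
      exact zip_replace_le y b X A B

lemma listOT_step [MetricSpace α] (b : α) (X Y : List α) (hlen : X.length = Y.length) :
    listOT dist (X ++ [b]) (Y ++ [b]) = listOT dist X Y := by
  have hsub : otSet dist X Y ⊆ otSet dist (X ++ [b]) (Y ++ [b]) := by
    rintro c ⟨Y', hp, rfl⟩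
    refine ⟨Y' ++ [b], hp.append_right [b], ?_⟩
    rw [List.zipWith_append (hlen.trans hp.length_eq)]
    simp
  apply _root_.le_antisymm
  · exact csInf_le_csInf (otSet_bddBelow _ _ _) (otSet_nonempty dist X Y) hsub
  · apply le_csInf (otSet_nonempty dist (X ++ [b]) (Y ++ [b]))
    rintro c ⟨Y'', hp, rfl⟩
    obtain ⟨Y', hperm, hle⟩ := step_le b X Y Y'' hlen hp
    exact le_trans (csInf_le (otSet_bddBelow dist X Y) ⟨Y', hperm, rfl⟩) hle

end ListOTAux

/-- Augmenting both equal-cardinality multisets with `n` copies of the blank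
element `𝟘` leaves the unnormalized OT cost unchanged. -/
theorem listOT_append_replicate_blank {α : Type*} [MetricSpace α] (b : α)
    (X Y : List α) (hlen : X.length = Y.length) (n : ℕ) :
    listOT dist (X ++ List.replicate n b) (Y ++ List.replicate n b) =
      listOT dist X Y := by
  induction n with
  | zero => simp
  | succ n ih =>
    rw [List.replicate_succ', ← List.append_assoc, ← List.append_assoc]
    rw [ListOTAux.listOT_step b (X ++ List.replicate n b) (Y ++ List.replicate n b) (by simp [hlen])]
    exact ih

end
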